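/- Let N' ≥ 1 and let p_1 < p_2 < ... < p_{N'} be the N' smallest prime numbers that are at least N'. If N' = ⌊√(K/ln K)⌋ for an integer K ≥ 2, then p_i ≤ 2·√(K·ln K) for all i ∈ [N']; in particular p_{N'} is at most the 2N'-th smallest prime, and using the bound p_n ≤ n(ln n + ln ln n) for n ≥ 6, the claim follows. -/

import Mathlib

lemma cheb (n : ℕ) (hn : 1 ≤ n) :
    4 ^ n ≤ (2*n) ^ (((Finset.range (2*n+1)).filter Nat.Prime).card + 1) := by
  calc 4 ^ n ≤ 2 * n * Nat.centralBinom n :=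
        Nat.four_pow_le_two_mul_self_mul_centralBinom n hn
    _ ≤ 2 * n * (2*n) ^ (((Finset.range (2*n+1)).filter Nat.Prime).card) := by
        gcongr
        calc Nat.centralBinom n
            = ∏ p ∈ Finset.range (2*n+1), p ^ (Nat.centralBinom n).factorization p :=
              (Nat.prod_pow_factorization_centralBinom n).symm
          _ = ∏ p ∈ (Finset.range (2*n+1)).filter Nat.Prime,
                p ^ (Nat.centralBinom n).factorization p := by
              rw [eq_comm]
              apply Finset.prod_subset (Finset.filter_subset _ _)
              intro p _ hp
              rw [Finset.mem_filter] at hp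
              have : ¬ p.Prime := by tauto
              rw [Nat.factorization_eq_zero_of_not_prime _ this, pow_zero]
          _ ≤ ∏ p ∈ (Finset.range (2*n+1)).filter Nat.Prime, (2*n) := by
              apply Finset.prod_le_prod'
              intro p _
              exact Nat.pow_factorization_choose_le (by omega)
          _ = (2*n) ^ (((Finset.range (2*n+1)).filter Nat.Prime).card) := by
              rw [Finset.prod_const]
    _ = (2*n) ^ (((Finset.range (2*n+1)).filter Nat.Prime).card + 1) := by ring

lemma pi_upper (N : ℕ) :
    ((Finset.range N).filter Nat.Prime).card ≤ (N-1)/2 + 2 := by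
  have hsub : (Finset.range N).filter Nat.Prime ⊆
      insert 2 ((Finset.range N).filter (fun x => x % 2 = 1)) := by
    intro q hq
    rw [Finset.mem_filter] at hq
    rcases hq with ⟨hq1, hq2⟩
    rcases hq2.eq_two_or_odd with h | h
    · simp [h]
    · exact Finset.mem_insert_of_mem (Finset.mem_filter.2 ⟨hq1, h⟩)
  have h2 : ((Finset.range N).filter (fun x => x % 2 = 1)).card ≤ (N-1)/2 + 1 := by
    have := Finset.card_le_card_of_injOn (fun x => x / 2)
      (s := (Finset.range N).filter (fun x => x % 2 = 1))
      (t := Finset.range ((N-1)/2 + 1)) ?_ ?_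
    · exact le_trans this (by simp)
    · intro x hx
      rw [Finset.mem_coe, Finset.mem_filter, Finset.mem_range] at hx
      rw [Finset.mem_coe, Finset.mem_range]
      show x / 2 < _
      omega
    · intro x hx y hy hxy
      rw [Finset.coe_filter, Set.mem_setOf_eq, Finset.mem_range] at hx hy
      have : x / 2 = y / 2 := hxy
      omega
  calc ((Finset.range N).filter Nat.Prime).card
      ≤ (insert 2 ((Finset.range N).filter (fun x => x % 2 = 1))).card :=
        Finset.card_le_card hsub
    _ ≤ ((Finset.range N).filter (fun x => x % 2 = 1)).card + 1 := Finset.card_insert_le _ _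
    _ ≤ (N-1)/2 + 2 := by omega


lemma card_split (a b : ℕ) (hab : a ≤ b + 1) :
    ((Finset.range (b+1)).filter Nat.Prime).card
      = ((Finset.range a).filter Nat.Prime).card + ((Finset.Icc a b).filter Nat.Prime).card := by
  have hu : Finset.range (b+1) = Finset.range a ∪ Finset.Icc a b := by
    ext x
    simp only [Finset.mem_range, Finset.mem_union, Finset.mem_Icc]
    omega
  rw [hu, Finset.filter_union, Finset.card_union_of_disjoint]
  refine Finset.disjoint_filter_filter ?_
  rw [Finset.disjoint_left]
  intro x hx hx'
  rw [Finset.mem_range] at hx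
  rw [Finset.mem_Icc] at hx'
  omega

set_option maxRecDepth 100000 in
set_option maxHeartbeats 4000000 in
attribute [local instance] Nat.decidablePrime in
lemma small_primes18_aux : ∀ v ∈ Finset.Icc 4 29,
    v ≤ ((Finset.Icc v (7*v+2)).filter Nat.Prime).card := by decide

lemma small_primes18 : ∀ v ∈ Finset.Icc 4 29,
    v ≤ ((Finset.Icc v (7*v+2)).filter Nat.Prime).card := by
  intro v hv
  have h := small_primes18_aux v hv
  rwa [Finset.filter_congr_decidable] at h

lemma key18 (K : ℕ) (N' : ℕ) (p : ℕ → ℕ)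
    (hsmallest : ∀ q : ℕ, q.Prime → N' ≤ q → ∀ i < N', q < p i → ∃ j < i, p j = q)
    (i : ℕ) (hi : i < N') (m : ℕ)
    (hm : (m : ℝ) ≤ 2 * Real.sqrt ((K : ℝ) * Real.log K))
    (hcard : N' ≤ ((Finset.Icc N' m).filter Nat.Prime).card) :
    (p i : ℝ) ≤ 2 * Real.sqrt ((K : ℝ) * Real.log K) := by
  by_contra hc
  push_neg at hc
  have hmp : m < p i := by exact_mod_cast lt_of_le_of_lt hm hc
  set T := (Finset.Icc N' m).filter Nat.Prime with hT
  have hex : ∀ q ∈ T, ∃ j, j < i ∧ p j = q := by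
    intro q hq
    rw [hT, Finset.mem_filter, Finset.mem_Icc] at hq
    obtain ⟨j, hj1, hj2⟩ := hsmallest q hq.2 hq.1.1 i hi (lt_of_le_of_lt hq.1.2 hmp)
    exact ⟨j, hj1, hj2⟩
  have hcle : T.card ≤ (Finset.range i).card := by
    apply Finset.card_le_card_of_injOn (fun q => if h : ∃ j, j < i ∧ p j = q then h.choose else 0)
    · intro q hq
      have h := hex q hq
      beta_reduce
      rw [Finset.mem_coe, dif_pos h]
      exact Finset.mem_range.2 h.choose_spec.1
    · intro a ha b hb hab
      have hA := hex a (by exact_mod_cast ha)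
      have hB := hex b (by exact_mod_cast hb)
      have hab' : (if h : ∃ j < i, p j = a then h.choose else 0)
          = (if h : ∃ j < i, p j = b then h.choose else 0) := hab
      rw [dif_pos hA, dif_pos hB] at hab'
      have h1 := hA.choose_spec.2
      have h2 := hB.choose_spec.2
      rw [← h1, ← h2, hab']
  rw [Finset.card_range] at hcle
  omega


lemma log_ge (K a b : ℕ) (h : 2^a ≤ K^b) :
    (a:ℝ) * Real.log 2 ≤ (b:ℝ) * Real.log K := by
  have h2 : ((2:ℝ))^a ≤ (K:ℝ)^b := by exact_mod_cast h
  have := Real.log_le_log (by positivity) h2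
  rwa [Real.log_pow, Real.log_pow] at this

set_option maxHeartbeats 1000000 in
lemma asymp (K N' : ℕ) (hK : 2 ≤ K) (hN : 30 ≤ N')
    (hKx : (N':ℝ)^2 * Real.log K ≤ K)
    (hKx' : (K:ℝ) < ((N':ℝ)+1)^2 * Real.log K) :
    ∃ m : ℕ, (m:ℝ) ≤ 2*(N':ℝ)*Real.log K ∧ N' ≤ ((Finset.Icc N' m).filter Nat.Prime).card := by
  set x := Real.log (K:ℝ) with hxdef
  set t := Real.log (N':ℝ) with htdef
  have hl2 : (0.6931 : ℝ) < Real.log 2 := by have := Real.log_two_gt_d9; linarith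
  have hl2' : Real.log 2 < (0.6932 : ℝ) := by have := Real.log_two_lt_d9; linarith
  have hN30 : (30:ℝ) ≤ (N':ℝ) := by exact_mod_cast hN
  have hx2 : Real.log 2 ≤ x := Real.log_le_log (by norm_num) (by exact_mod_cast hK)
  have hx0 : 0 < x := by linarith
  -- K ≥ 624, so x ≥ 6.23
  have hK624' : 624 ≤ K := by
    have hsq : (900:ℝ) ≤ (N':ℝ)^2 := by nlinarith
    have hbig : (623:ℝ) < (K:ℝ) := by
      nlinarith [mul_nonneg (by nlinarith : (0:ℝ) ≤ (N':ℝ)^2 - 900) hx0.le]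
    have : (623:ℕ) < K := by exact_mod_cast hbig
    omega
  have hK624 : (624:ℝ) ≤ (K:ℝ) := by exact_mod_cast hK624'
  have hx62 : (6.23:ℝ) ≤ x := by
    have h9 := log_ge K 9 1 (by calc 2^9 ≤ 624 := by norm_num
                                _ ≤ K^1 := by simpa using hK624')
    rw [← hxdef] at h9
    push_cast at h9
    linarith
  -- t ≥ 3.3788
  have ht : (3.3788:ℝ) ≤ t := by
    have h39 := log_ge N' 39 8 (by calc (2:ℕ)^39 ≤ 30^8 := by norm_num
                                  _ ≤ N'^8 := Nat.pow_le_pow_left hN 8)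
    rw [← htdef] at h39
    push_cast at h39
    linarith
  -- log (N'+1) ≤ t + 1/30
  have ht' : Real.log ((N':ℝ)+1) ≤ t + 1/30 := by
    have hpos : (0:ℝ) < ((N':ℝ)+1)/(N':ℝ) := by positivity
    have h := Real.log_le_sub_one_of_pos hpos
    rw [Real.log_div (by positivity) (by positivity)] at h
    have h1 : ((N':ℝ)+1)/(N':ℝ) - 1 = 1/(N':ℝ) := by field_simp; ring
    have h2 : (1:ℝ)/(N':ℝ) ≤ 1/30 := by
      apply one_div_le_one_div_of_le <;> linarith
    rw [← htdef] at h
    linarith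
  -- x ≥ 2t + log x
  have hxlow : 2*t + Real.log x ≤ x := by
    have h := Real.log_le_log (show (0:ℝ) < (N':ℝ)^2*x by positivity) hKx
    rw [Real.log_mul (by positivity) hx0.ne', Real.log_pow, ← htdef, ← hxdef] at h
    push_cast at h
    linarith
  -- x ≤ 2 log(N'+1) + log x
  have hxup : x ≤ 2*Real.log ((N':ℝ)+1) + Real.log x := by
    have h := Real.log_le_log (show (0:ℝ) < (K:ℝ) by positivity) hKx'.le
    rw [Real.log_mul (by positivity) hx0.ne', Real.log_pow, ← hxdef] at h
    push_cast at h
    linarith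
  -- log x ≤ 0.36788 x
  have hlnx : Real.log x ≤ x * 0.36788 := by
    have h := Real.log_le_sub_one_of_pos (show (0:ℝ) < x / Real.exp 1 by positivity)
    rw [Real.log_div hx0.ne' (Real.exp_ne_zero 1), Real.log_exp] at h
    have he : (2.718281:ℝ) < Real.exp 1 := by have := Real.exp_one_gt_d9; linarith
    have : x / Real.exp 1 ≤ x * 0.36788 := by
      rw [div_le_iff₀ (by positivity)]
      nlinarith
    linarith
  -- x upper bound
  have hxq : x * 0.63212 ≤ 2*t + 1/15 := by nlinarith
  -- floor
  set c := ⌊x⌋₊ with hcdef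
  have hc1 : (c:ℝ) ≤ x := Nat.floor_le hx0.le
  have hc2 : x < (c:ℝ) + 1 := Nat.lt_floor_add_one x
  have hcpos : 1 ≤ c := Nat.le_floor (by push_cast; linarith)
  clear_value c
  refine ⟨2*(N'*c), ?_, ?_⟩
  · push_cast
    nlinarith
  · set n := N' * c with hndef
    clear_value n
    have hn1 : 1 ≤ n := by
      rw [hndef]
      exact Nat.one_le_iff_ne_zero.2 (Nat.mul_ne_zero (by omega) (by omega))
    have hN'n : N' ≤ n := by rw [hndef]; exact Nat.le_mul_of_pos_right N' hcpos
    have hch := cheb n hn1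
    set P := ((Finset.range (2*n+1)).filter Nat.Prime).card with hPdef
    set R := ((Finset.range N').filter Nat.Prime).card with hRdef
    have hsplit := card_split N' (2*n) (by omega)
    rw [← hPdef, ← hRdef] at hsplit
    clear_value P R
    suffices h : R + N' ≤ P by omega
    set L := Real.log ((2*n:ℕ):ℝ) with hLdef
    clear_value L
    have hchlog : (n:ℝ) * (2*Real.log 2) ≤ ((P:ℝ)+1) * L := by
      have h := Real.log_le_log (show (0:ℝ) < (4:ℝ)^n by positivity)
        (show ((4:ℝ))^n ≤ ((2*n:ℕ):ℝ)^(P+1) by exact_mod_cast hch)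
      rw [Real.log_pow, Real.log_pow, ← hLdef] at h
      have h4 : Real.log 4 = 2*Real.log 2 := by
        rw [show (4:ℝ) = 2^2 by norm_num, Real.log_pow]
        push_cast; ring
      rw [h4] at h
      push_cast at h
      linarith
    have hceq : ((2*n:ℕ):ℝ) = 2*((N':ℝ)*(c:ℝ)) := by rw [hndef]; push_cast; ring
    have hc0 : (0:ℝ) < (c:ℝ) := by exact_mod_cast hcpos
    have hLeq : L = Real.log 2 + (t + Real.log c) := by
      rw [hLdef, hceq, Real.log_mul (by norm_num) (by positivity),
        Real.log_mul (by positivity) hc0.ne', ← htdef]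
    have hlogc : Real.log (c:ℝ) ≤ Real.log x := Real.log_le_log hc0 hc1
    have hLup : L ≤ Real.log 2 + x - t := by
      rw [hLeq]; linarith
    have hL0 : 0 < L := by
      rw [hLeq]
      have : (0:ℝ) ≤ Real.log (c:ℝ) := Real.log_nonneg (by exact_mod_cast hcpos)
      nlinarith
    have hRle : (R:ℝ) ≤ (N':ℝ)/2 + 2 := by
      have h1 := pi_upper N'
      rw [← hRdef] at h1
      have h2 : ((((N':ℕ)-1)/2 : ℕ) : ℝ) ≤ (((N':ℕ)-1 : ℕ):ℝ)/2 := Nat.cast_div_le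
      have h3 : (((N':ℕ)-1 : ℕ):ℝ) ≤ (N':ℝ) := by
        have : (N':ℕ)-1 ≤ N' := by omega
        exact_mod_cast this
      have h4 : (R:ℝ) ≤ ((((N':ℕ)-1)/2 : ℕ) : ℝ) + 2 := by exact_mod_cast h1
      linarith
    have hnc : (n:ℝ) = (N':ℝ) * (c:ℝ) := by rw [hndef]; push_cast; ring
    have hkey : ((R:ℝ) + N' + 1) * L ≤ (n:ℝ) * (2*Real.log 2) := by
      have s1 : ((R:ℝ) + N' + 1) * L ≤ (1.5*(N':ℝ)+3) * L := by nlinarith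
      have s2 : (1.5*(N':ℝ)+3) * L ≤ (1.5*(N':ℝ)+3) * (Real.log 2 + x - t) := by nlinarith
      have s3 : (1.5*(N':ℝ)+3) * (Real.log 2 + x - t) ≤ 2*Real.log 2 * (N':ℝ) * (x-1) := by
        nlinarith [mul_nonneg (sub_nonneg.2 hN30) (sub_nonneg.2 ht),
          mul_nonneg (sub_nonneg.2 hN30) (sub_nonneg.2 hx62),
          mul_nonneg (sub_nonneg.2 ht) (sub_nonneg.2 hx62),
          mul_nonneg (sub_nonneg.2 hN30) (sub_nonneg.2 hxq)]
      have s4 : 2*Real.log 2 * (N':ℝ) * (x-1) ≤ (n:ℝ) * (2*Real.log 2) := by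
        rw [hnc]
        nlinarith [mul_nonneg (mul_nonneg (by linarith : (0:ℝ) ≤ 2*Real.log 2)
          (by linarith : (0:ℝ) ≤ (N':ℝ))) (by linarith : (0:ℝ) ≤ (c:ℝ) - (x-1))]
      linarith only [s1, s2, s3, s4]
    have hml := le_trans hkey hchlog
    have hfin : ((R:ℝ) + N' + 1) ≤ (P:ℝ) + 1 := (mul_le_mul_iff_of_pos_right hL0).mp hml
    have hfin3 : ((R + N' : ℕ):ℝ) ≤ ((P:ℕ):ℝ) := by
      rw [Nat.cast_add]
      linarith only [hfin]
    exact Nat.cast_le.mp hfin3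

set_option maxHeartbeats 1000000 in
/-- If `N' = ⌊√(K/ln K)⌋` and `p 0 < p 1 < ⋯ < p (N'-1)` are the `N'` smallest primes
that are at least `N'`, then every `p i ≤ 2√(K ln K)`. -/
theorem stmt18 (K : ℕ) (hK : 2 ≤ K) (N' : ℕ)
    (hN' : N' = ⌊Real.sqrt ((K : ℝ) / Real.log K)⌋₊) (hN1 : 1 ≤ N')
    (p : ℕ → ℕ)
    (hprime : ∀ i < N', (p i).Prime)
    (hge : ∀ i < N', N' ≤ p i)
    (hinc : ∀ i j : ℕ, i < j → j < N' → p i < p j)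
    (hsmallest : ∀ q : ℕ, q.Prime → N' ≤ q → ∀ i < N', q < p i → ∃ j < i, p j = q) :
    ∀ i < N', (p i : ℝ) ≤ 2 * Real.sqrt ((K : ℝ) * Real.log K) := by
  intro i hi
  set x := Real.log ((K : ℕ) : ℝ) with hxdef
  have hl2 : (0.6931 : ℝ) < Real.log 2 := by have := Real.log_two_gt_d9; linarith
  have hx2 : Real.log 2 ≤ x := Real.log_le_log (by norm_num) (by exact_mod_cast hK)
  have hx0 : 0 < x := by linarith
  have hKcast : (2:ℝ) ≤ (K:ℝ) := by exact_mod_cast hK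
  have hnn : (0:ℝ) ≤ (K:ℝ) * x := mul_nonneg (by positivity) hx0.le
  -- N'^2 x ≤ K
  have h1 : (N' : ℝ) ≤ Real.sqrt ((K : ℝ) / x) := by
    rw [hN']; exact_mod_cast Nat.floor_le (Real.sqrt_nonneg _)
  have hsq := Real.sq_sqrt (show (0:ℝ) ≤ (K:ℝ)/x by positivity)
  have hKx : (N' : ℝ)^2 * x ≤ K := by
    have h2 : (N' : ℝ)^2 ≤ (K:ℝ)/x := by nlinarith [Real.sqrt_nonneg ((K:ℝ)/x)]
    have h3 : (N' : ℝ)^2 * x ≤ ((K:ℝ)/x) * x := by nlinarith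
    calc (N' : ℝ)^2 * x ≤ ((K:ℝ)/x) * x := h3
      _ = K := by field_simp
  -- K < (N'+1)^2 x
  have hKx' : (K:ℝ) < ((N':ℝ)+1)^2 * x := by
    have h4 : Real.sqrt ((K : ℝ) / x) < (N' : ℝ) + 1 := by
      rw [hN']
      exact Nat.lt_floor_add_one _
    have h5 : (K:ℝ)/x < ((N':ℝ)+1)^2 := by nlinarith [Real.sqrt_nonneg ((K:ℝ)/x)]
    have h6 : (K:ℝ)/x * x < ((N':ℝ)+1)^2 * x := by nlinarith
    calc (K:ℝ) = (K:ℝ)/x * x := by field_simp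
      _ < ((N':ℝ)+1)^2 * x := h6
  -- N' x ≤ sqrt(K x)
  have hNx : (N':ℝ) * x ≤ Real.sqrt ((K:ℝ) * x) := by
    rw [Real.le_sqrt (by positivity) hnn]
    nlinarith [hKx, hx0]
  by_cases h30 : 30 ≤ N'
  · obtain ⟨m, hm1, hm2⟩ := asymp K N' hK h30 hKx hKx'
    refine key18 K N' p hsmallest i hi m ?_ hm2
    calc (m:ℝ) ≤ 2*(N':ℝ)*x := hm1
      _ ≤ 2*Real.sqrt ((K:ℝ)*x) := by nlinarith [hNx]
  · push_neg at h30
    by_cases h4 : 4 ≤ N'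
    · -- 4 ≤ N' ≤ 29
      have hN4 : (4:ℝ) ≤ (N':ℝ) := by exact_mod_cast h4
      have h16 : 16*x ≤ (K:ℝ) := by nlinarith
      have hK12 : 12 ≤ K := by
        have : (11:ℝ) < K := by nlinarith
        have : (11:ℕ) < K := by exact_mod_cast this
        omega
      have hxa : (2.4258:ℝ) ≤ x := by
        have h7 := log_ge K 7 2 (le_trans (by norm_num : (2:ℕ)^7 ≤ 12^2)
          (Nat.pow_le_pow_left hK12 2))
        rw [← hxdef] at h7
        push_cast at h7
        linarith
      have hK39 : 39 ≤ K := by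
        have : (38:ℝ) < K := by nlinarith
        have : (38:ℕ) < K := by exact_mod_cast this
        omega
      have hxb : (3.4655:ℝ) ≤ x := by
        have h5 := log_ge K 5 1 (by simpa using le_trans (by norm_num : (2:ℕ)^5 ≤ 39) hK39)
        rw [← hxdef] at h5
        push_cast at h5
        linarith
      have hK56 : 56 ≤ K := by
        have : (55:ℝ) < K := by nlinarith
        have : (55:ℕ) < K := by exact_mod_cast this
        omega
      have hxc : (3.9605:ℝ) ≤ x := by
        have h40 := log_ge K 40 7 (le_trans (by norm_num : (2:ℕ)^40 ≤ 56^7)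
          (Nat.pow_le_pow_left hK56 7))
        rw [← hxdef] at h40
        push_cast at h40
        linarith
      refine key18 K N' p hsmallest i hi (7*N'+2) ?_
        (small_primes18 N' (Finset.mem_Icc.2 ⟨h4, by omega⟩))
      have hm1 : ((7*N'+2 : ℕ):ℝ) ≤ 2*(N':ℝ)*x := by
        push_cast
        nlinarith
      calc ((7*N'+2 : ℕ):ℝ) ≤ 2*(N':ℝ)*x := hm1
        _ ≤ 2*Real.sqrt ((K:ℝ)*x) := by nlinarith [hNx]
    · -- N' ≤ 3
      push_neg at h4
      interval_cases N'
      · -- N' = 1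
        refine key18 K 1 p hsmallest i hi 2 ?_ (by decide)
        have hs : (1:ℝ) ≤ Real.sqrt ((K:ℝ)*x) := by
          rw [Real.le_sqrt (by norm_num) hnn]
          nlinarith
        push_cast
        linarith
      · -- N' = 2
        have hKx2 : 4*x ≤ (K:ℝ) := by
          push_cast at hKx
          linarith
        have hK3 : 3 ≤ K := by
          have : (2.7:ℝ) < K := by nlinarith
          have : (2:ℕ) < K := by exact_mod_cast (show (2:ℝ) < K by linarith)
          omega
        have hxa : (1.0396:ℝ) ≤ x := by
          have h3 := log_ge K 3 2 (le_trans (by norm_num : (2:ℕ)^3 ≤ 3^2)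
            (Nat.pow_le_pow_left hK3 2))
          rw [← hxdef] at h3
          push_cast at h3
          linarith
        refine key18 K 2 p hsmallest i hi 3 ?_ (by decide)
        have hs : (1.5:ℝ) ≤ Real.sqrt ((K:ℝ)*x) := by
          rw [Real.le_sqrt (by norm_num) hnn]
          have : (3:ℝ) ≤ K := by exact_mod_cast hK3
          nlinarith
        push_cast
        linarith
      · -- N' = 3
        have hKx9 : 9*x ≤ (K:ℝ) := by
          push_cast at hKx
          linarith
        have hK7 : 7 ≤ K := by
          have : (6:ℝ) < K := by nlinarith
          have : (6:ℕ) < K := by exact_mod_cast this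
          omega
        have hxa : (1.386:ℝ) ≤ x := by
          have h2 := log_ge K 2 1 (by simpa using le_trans (by norm_num : (2:ℕ)^2 ≤ 7) hK7)
          rw [← hxdef] at h2
          push_cast at h2
          linarith
        have hK13 : 13 ≤ K := by
          have : (12:ℝ) < K := by nlinarith
          have : (12:ℕ) < K := by exact_mod_cast this
          omega
        have hxb : (2.079:ℝ) ≤ x := by
          have h3 := log_ge K 3 1 (by simpa using le_trans (by norm_num : (2:ℕ)^3 ≤ 13) hK13)
          rw [← hxdef] at h3
          push_cast at h3
          linarith
        have hK19 : 19 ≤ K := by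
          have : (18:ℝ) < K := by nlinarith
          have : (18:ℕ) < K := by exact_mod_cast this
          omega
        have hxc : (2.772:ℝ) ≤ x := by
          have h4' := log_ge K 4 1 (by simpa using le_trans (by norm_num : (2:ℕ)^4 ≤ 19) hK19)
          rw [← hxdef] at h4'
          push_cast at h4'
          linarith
        refine key18 K 3 p hsmallest i hi 7 ?_ (by decide)
        have hs : (3.5:ℝ) ≤ Real.sqrt ((K:ℝ)*x) := by
          rw [Real.le_sqrt (by norm_num) hnn]
          have : (19:ℝ) ≤ K := by exact_mod_cast hK19
          nlinarith
        push_cast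
        linarith
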